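/- Let F = ℤ/2ℤ and let R be the subring of the 3×3 matrix ring over F consisting of all matrices whose only possibly nonzero entries are in positions (1,1), (1,2), (1,3), (2,2), and (3,3). Then the right R-module e₁₁R (where e₁₁ is the matrix unit with 1 in position (1,1)) is indecomposable and automorphism-invariant, but not quasi-injective. In particular, there exists a finite-dimensional algebra over the field with two elements admitting an indecomposable automorphism-invariant right module that is not quasi-injective. -/

import Mathlib

universe u v w

section Defs

variable (A : Type u) [Ring A]

/-- `N` is an essential submodule of `M`: it meets every nonzero submodule nontrivially. -/
def IsEssentialIn {M : Type v} [AddCommGroup M] [Module A M] (N : Submodule A M) : Prop :=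
  ∀ K : Submodule A M, K ≠ ⊥ → N ⊓ K ≠ ⊥

/-- `i : M →ₗ[A] E` realizes `E` as an injective hull of `M`: `E` is injective and the image
of `M` is an essential submodule of `E`. -/
def IsInjHull (M : Type v) [AddCommGroup M] [Module A M]
    (E : Type v) [AddCommGroup E] [Module A E] (i : M →ₗ[A] E) : Prop :=
  Function.Injective i ∧ Module.Injective A E ∧ IsEssentialIn A (LinearMap.range i)

/-- `M` is automorphism-invariant: for any injective hull `E` of `M`, the image of `M` is
invariant under every automorphism of `E`. -/
def IsAutInv (M : Type v) [AddCommGroup M] [Module A M] : Prop :=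
  ∀ (E : Type v) [AddCommGroup E] [Module A E] (i : M →ₗ[A] E),
    IsInjHull A M E i →
      ∀ σ : E ≃ₗ[A] E, (LinearMap.range i).map (σ : E →ₗ[A] E) ≤ LinearMap.range i

/-- `M` is quasi-injective: every homomorphism from a submodule of `M` into `M` extends to an
endomorphism of `M`. -/
def IsQuasiInj (M : Type v) [AddCommGroup M] [Module A M] : Prop :=
  ∀ (N : Submodule A M) (f : ↥N →ₗ[A] M), ∃ g : M →ₗ[A] M, ∀ n : ↥N, g ↑n = f n

/-- `M` is pseudo-injective: every monomorphism from a submodule of `M` into `M` extends to an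
endomorphism of `M`. -/
def IsPseudoInj (M : Type v) [AddCommGroup M] [Module A M] : Prop :=
  ∀ (N : Submodule A M) (f : ↥N →ₗ[A] M), Function.Injective f →
    ∃ g : M →ₗ[A] M, ∀ n : ↥N, g ↑n = f n

/-- `M` is quasi-projective: every homomorphism `M → M/N` lifts to an endomorphism of `M`. -/
def IsQuasiProj (M : Type v) [AddCommGroup M] [Module A M] : Prop :=
  ∀ (N : Submodule A M) (f : M →ₗ[A] M ⧸ N), ∃ g : M →ₗ[A] M, N.mkQ.comp g = f

/-- `M` is an indecomposable module: nonzero and not an (internal) direct sum of two nonzero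
submodules. -/
def IsIndecomposableMod (M : Type v) [AddCommGroup M] [Module A M] : Prop :=
  Nontrivial M ∧ ∀ N₁ N₂ : Submodule A M, IsCompl N₁ N₂ → N₁ = ⊥ ∨ N₂ = ⊥

/-- `M` is a uniform module: nonzero, and any two nonzero submodules intersect nontrivially. -/
def IsUniformMod (M : Type v) [AddCommGroup M] [Module A M] : Prop :=
  Nontrivial M ∧ ∀ N₁ N₂ : Submodule A M, N₁ ≠ ⊥ → N₂ ≠ ⊥ → N₁ ⊓ N₂ ≠ ⊥

/-- `M` is uniserial: its submodules are linearly ordered by inclusion. -/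
def IsUniserialMod (M : Type v) [AddCommGroup M] [Module A M] : Prop :=
  ∀ N₁ N₂ : Submodule A M, N₁ ≤ N₂ ∨ N₂ ≤ N₁

/-- `M` is a local module: it has a unique maximal submodule containing every proper submodule. -/
def IsLocalMod (M : Type v) [AddCommGroup M] [Module A M] : Prop :=
  ∃ N : Submodule A M, N ≠ ⊤ ∧ ∀ K : Submodule A M, K ≠ ⊤ → K ≤ N

/-- The socle of `M`: the sum of all simple submodules. -/
def SocleOf (M : Type v) [AddCommGroup M] [Module A M] : Submodule A M :=
  sSup {S : Submodule A M | IsSimpleModule A ↥S}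

/-- The socle of a submodule `N` of `M`, as a submodule of `M`: the sum of all simple
submodules of `M` contained in `N`. -/
def SocleIn {M : Type v} [AddCommGroup M] [Module A M] (N : Submodule A M) : Submodule A M :=
  sSup {S : Submodule A M | S ≤ N ∧ IsSimpleModule A ↥S}

/-- `M` is a singular module: every element is annihilated by an essential (right) ideal. -/
def IsSingularMod (M : Type v) [AddCommGroup M] [Module A M] : Prop :=
  ∀ m : M, IsEssentialIn A (LinearMap.ker (LinearMap.toSpanSingleton A M m))

/-- `M` is a cyclic module. -/
def IsCyclicMod (M : Type v) [AddCommGroup M] [Module A M] : Prop :=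
  ∃ m : M, Submodule.span A {m} = ⊤

end Defs

section RingDefs

variable (R : Type u) [Ring R]

/-- `R` is of right automorphism-invariant type: every finitely generated indecomposable
right `R`-module (i.e. left `Rᵐᵒᵖ`-module) is automorphism-invariant. -/
def IsRAIType : Prop :=
  ∀ (M : Type u) [AddCommGroup M] [Module Rᵐᵒᵖ M], Module.Finite Rᵐᵒᵖ M →
    IsIndecomposableMod Rᵐᵒᵖ M → IsAutInv Rᵐᵒᵖ M

/-- `R` is an indecomposable ring: it is nonzero and is not the direct sum of two nonzero
two-sided ideals. -/
def IsIndecRing : Prop :=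
  Nontrivial R ∧ ¬ ∃ I J : Ideal R, (∀ x ∈ I, ∀ r : R, x * r ∈ I) ∧
    (∀ x ∈ J, ∀ r : R, x * r ∈ J) ∧ I ≠ ⊥ ∧ J ≠ ⊥ ∧ IsCompl I J

/-- The right ideal `xR` of `R`. -/
def RtIdeal (x : R) : Submodule Rᵐᵒᵖ R := Submodule.span Rᵐᵒᵖ ({x} : Set R)

/-- The right ideal `xJ(R)` of `R`, where `J(R)` is the Jacobson radical. -/
def RtIdealJ (x : R) : Submodule Rᵐᵒᵖ R :=
  Submodule.span Rᵐᵒᵖ ((fun j => x * j) '' ((Ideal.jacobson (⊥ : Ideal R) : Ideal R) : Set R))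

/-- The module `xR / xJ(R)`. -/
abbrev TopQuot (x : R) :=
  ↥(RtIdeal R x) ⧸ Submodule.comap (RtIdeal R x).subtype (RtIdealJ R x)

end RingDefs

/-- The ring of the example: all 3×3 matrices over `ℤ/2ℤ` whose only possibly nonzero entries
are in positions (0,0), (0,1), (0,2), (1,1) and (2,2) (zero-indexed), as a subalgebra of the
full matrix algebra. -/
def TriS : Subalgebra (ZMod 2) (Matrix (Fin 3) (Fin 3) (ZMod 2)) where
  carrier := {X | X 1 0 = 0 ∧ X 2 0 = 0 ∧ X 1 2 = 0 ∧ X 2 1 = 0}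
  add_mem' := by
    rintro a b ⟨ha1, ha2, ha3, ha4⟩ ⟨hb1, hb2, hb3, hb4⟩
    refine ⟨?_, ?_, ?_, ?_⟩ <;> simp [Matrix.add_apply, *]
  mul_mem' := by
    rintro a b ⟨ha1, ha2, ha3, ha4⟩ ⟨hb1, hb2, hb3, hb4⟩
    refine ⟨?_, ?_, ?_, ?_⟩ <;> simp [Matrix.mul_apply, Fin.sum_univ_three, *]
  algebraMap_mem' := by
    intro r
    refine ⟨?_, ?_, ?_, ?_⟩ <;>
      simp [Matrix.algebraMap_matrix_apply]
  zero_mem' := by simp [Matrix.zero_apply]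
  one_mem' := by
    refine ⟨?_, ?_, ?_, ?_⟩ <;> simp [Matrix.one_apply]

/-- The idempotent `e₁₁` (matrix unit) as an element of `TriS`. -/
def e11 : ↥TriS :=
  ⟨Matrix.single 0 0 1, by
    refine ⟨?_, ?_, ?_, ?_⟩ <;> simp [Matrix.single]⟩

/-- There is a finite-dimensional algebra over the field with two elements admitting an
indecomposable automorphism-invariant right module that is not quasi-injective. -/
structure FDTwoElementFieldCounterexample where
  A : Type
  [ringA : Ring A]
  [algA : Algebra (ZMod 2) A]
  fd : FiniteDimensional (ZMod 2) A
  M : Type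
  [agM : AddCommGroup M]
  [modM : Module Aᵐᵒᵖ M]
  indec : IsIndecomposableMod Aᵐᵒᵖ M
  autinv : IsAutInv Aᵐᵒᵖ M
  notQI : ¬ IsQuasiInj Aᵐᵒᵖ M

section Work

open MulOpposite

abbrev AA := (↥TriS)ᵐᵒᵖ

set_option maxHeartbeats 1600000
set_option synthInstance.maxHeartbeats 400000

lemma z2 (a : ZMod 2) : a = 0 ∨ a = 1 := by revert a; decide

/-- generic element of TriS -/
def mk5 (a b c d e : ZMod 2) : ↥TriS :=
  ⟨Matrix.of ![![a,b,c], ![0,d,0], ![0,0,e]], by refine ⟨?_,?_,?_,?_⟩ <;> rfl⟩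

lemma mk5_entries (a b c d e : ZMod 2) :
    (mk5 a b c d e).1 0 0 = a ∧ (mk5 a b c d e).1 0 1 = b ∧ (mk5 a b c d e).1 0 2 = c ∧
    (mk5 a b c d e).1 1 1 = d ∧ (mk5 a b c d e).1 2 2 = e := by
  refine ⟨rfl, rfl, rfl, rfl, rfl⟩

lemma eta (m : ↥TriS) : m = mk5 (m.1 0 0) (m.1 0 1) (m.1 0 2) (m.1 1 1) (m.1 2 2) := by
  obtain ⟨m, h1, h2, h3, h4⟩ := m
  apply Subtype.ext
  ext i j
  fin_cases i <;> fin_cases j <;> simp [mk5, Matrix.vecHead, Matrix.vecTail, Matrix.vecHead, Matrix.vecTail] <;> assumption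

lemma mk5_mul (a b c d e a' b' c' d' e' : ZMod 2) :
    mk5 a b c d e * mk5 a' b' c' d' e' =
      mk5 (a*a') (a*b' + b*d') (a*c' + c*e') (d*d') (e*e') := by
  apply Subtype.ext
  show (mk5 a b c d e).1 * (mk5 a' b' c' d' e').1 = _
  ext i j
  fin_cases i <;> fin_cases j <;>
    simp [mk5, Matrix.vecHead, Matrix.vecTail, Matrix.mul_apply, Fin.sum_univ_three] <;> ring

lemma mk5_add (a b c d e a' b' c' d' e' : ZMod 2) :
    mk5 a b c d e + mk5 a' b' c' d' e' = mk5 (a+a') (b+b') (c+c') (d+d') (e+e') := by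
  apply Subtype.ext
  show (mk5 a b c d e).1 + (mk5 a' b' c' d' e').1 = _
  ext i j
  fin_cases i <;> fin_cases j <;> simp [mk5, Matrix.vecHead, Matrix.vecTail, Matrix.vecHead, Matrix.vecTail]

lemma mk5_one : (1 : ↥TriS) = mk5 1 0 0 1 1 := by
  apply Subtype.ext
  show (1 : Matrix (Fin 3) (Fin 3) (ZMod 2)) = _
  ext i j
  fin_cases i <;> fin_cases j <;> simp [mk5, Matrix.vecHead, Matrix.vecTail, Matrix.one_apply]

lemma mk5_zero : (0 : ↥TriS) = mk5 0 0 0 0 0 := by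
  apply Subtype.ext
  show (0 : Matrix (Fin 3) (Fin 3) (ZMod 2)) = _
  ext i j
  fin_cases i <;> fin_cases j <;> simp [mk5, Matrix.vecHead, Matrix.vecTail, Matrix.vecHead, Matrix.vecTail]

lemma mk5_inj {a b c d e a' b' c' d' e' : ZMod 2}
    (h : mk5 a b c d e = mk5 a' b' c' d' e') :
    a = a' ∧ b = b' ∧ c = c' ∧ d = d' ∧ e = e' := by
  have h' := congrArg Subtype.val h
  refine ⟨congrFun (congrFun h' 0) 0, congrFun (congrFun h' 0) 1,
    congrFun (congrFun h' 0) 2, congrFun (congrFun h' 1) 1, congrFun (congrFun h' 2) 2⟩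

lemma e11_eq : e11 = mk5 1 0 0 0 0 := by
  apply Subtype.ext
  show Matrix.single 0 0 1 = _
  ext i j
  fin_cases i <;> fin_cases j <;> simp [mk5, Matrix.vecHead, Matrix.vecTail, Matrix.single]

lemma op_smul_eq (a : AA) (x : ↥TriS) : a • x = x * a.unop :=
  MulOpposite.smul_eq_mul_unop a x

lemma e11_mul_self (m : ↥TriS) (h1 : m.1 1 1 = 0) (h2 : m.1 2 2 = 0) : e11 * m = m := by
  obtain ⟨m, c1, c2, c3, c4⟩ := m
  apply Subtype.ext
  show Matrix.single 0 0 1 * m = m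
  ext i j
  fin_cases i <;> fin_cases j <;>
    simp [Matrix.mul_apply, Fin.sum_univ_three, Matrix.single] <;> simp_all

lemma entries_e11_mul (u : ↥TriS) : (e11 * u).1 1 1 = 0 ∧ (e11 * u).1 2 2 = 0 := by
  have : ((e11 * u : ↥TriS) : Matrix (Fin 3) (Fin 3) (ZMod 2)) =
      Matrix.single 0 0 1 * (u : Matrix (Fin 3) (Fin 3) (ZMod 2)) := rfl
  rw [this]
  constructor <;> simp [Matrix.mul_apply, Fin.sum_univ_three, Matrix.single]

lemma mem_rtIdeal (m : ↥TriS) :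
    m ∈ RtIdeal (↥TriS) e11 ↔ m.1 1 1 = 0 ∧ m.1 2 2 = 0 := by
  rw [RtIdeal, Submodule.mem_span_singleton]
  constructor
  · rintro ⟨a, rfl⟩
    rw [op_smul_eq]
    exact entries_e11_mul a.unop
  · rintro ⟨h1, h2⟩
    exact ⟨op m, by rw [op_smul_eq, unop_op, e11_mul_self m h1 h2]⟩
lemma mul_e00 (x y : ↥TriS) : (x*y).1 0 0 = x.1 0 0 * y.1 0 0 := by
  obtain ⟨x, a1, a2, a3, a4⟩ := x; obtain ⟨y, b1, b2, b3, b4⟩ := y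
  show (x * y) 0 0 = _
  simp [Matrix.mul_apply, Fin.sum_univ_three, b1, b2]

lemma mul_e01 (x y : ↥TriS) : (x*y).1 0 1 = x.1 0 0 * y.1 0 1 + x.1 0 1 * y.1 1 1 := by
  obtain ⟨x, a1, a2, a3, a4⟩ := x; obtain ⟨y, b1, b2, b3, b4⟩ := y
  show (x * y) 0 1 = _
  simp [Matrix.mul_apply, Fin.sum_univ_three, b4]

lemma mul_e02 (x y : ↥TriS) : (x*y).1 0 2 = x.1 0 0 * y.1 0 2 + x.1 0 2 * y.1 2 2 := by
  obtain ⟨x, a1, a2, a3, a4⟩ := x; obtain ⟨y, b1, b2, b3, b4⟩ := y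
  show (x * y) 0 2 = _
  simp [Matrix.mul_apply, Fin.sum_univ_three, b3]

lemma mul_e11 (x y : ↥TriS) : (x*y).1 1 1 = x.1 1 1 * y.1 1 1 := by
  obtain ⟨x, a1, a2, a3, a4⟩ := x; obtain ⟨y, b1, b2, b3, b4⟩ := y
  show (x * y) 1 1 = _
  simp [Matrix.mul_apply, Fin.sum_univ_three, a1, a3, b2]

lemma mul_e22 (x y : ↥TriS) : (x*y).1 2 2 = x.1 2 2 * y.1 2 2 := by
  obtain ⟨x, a1, a2, a3, a4⟩ := x; obtain ⟨y, b1, b2, b3, b4⟩ := y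
  show (x * y) 2 2 = _
  simp [Matrix.mul_apply, Fin.sum_univ_three, a2, a4, b3]

/-- The concrete injective hull: `E(S₂) × E(S₃)`. -/
def E0 : Type := (ZMod 2 × ZMod 2) × (ZMod 2 × ZMod 2)

instance : AddCommGroup E0 :=
  inferInstanceAs (AddCommGroup ((ZMod 2 × ZMod 2) × (ZMod 2 × ZMod 2)))

/-- constructor for `E0` -/
def mkE (a b c d : ZMod 2) : E0 := ((a, b), (c, d))

instance instSMulE0 : SMul AA E0 :=
  ⟨fun a w =>
    ((w.1.1 * (a.unop).1 0 0, w.1.1 * (a.unop).1 0 1 + w.1.2 * (a.unop).1 1 1),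
     (w.2.1 * (a.unop).1 0 0, w.2.1 * (a.unop).1 0 2 + w.2.2 * (a.unop).1 2 2))⟩

lemma smul_c1 (a : AA) (w : E0) : (a • w).1.1 = w.1.1 * (a.unop).1 0 0 := rfl
lemma smul_c2 (a : AA) (w : E0) :
    (a • w).1.2 = w.1.1 * (a.unop).1 0 1 + w.1.2 * (a.unop).1 1 1 := rfl
lemma smul_c3 (a : AA) (w : E0) : (a • w).2.1 = w.2.1 * (a.unop).1 0 0 := rfl
lemma smul_c4 (a : AA) (w : E0) :
    (a • w).2.2 = w.2.1 * (a.unop).1 0 2 + w.2.2 * (a.unop).1 2 2 := rfl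

lemma coe_one_entry (i j : Fin 3) : (1 : ↥TriS).1 i j = (1 : Matrix (Fin 3) (Fin 3) (ZMod 2)) i j := rfl
lemma coe_add_entry (x y : ↥TriS) (i j : Fin 3) : (x + y).1 i j = x.1 i j + y.1 i j := rfl
lemma coe_zero_entry (i j : Fin 3) : (0 : ↥TriS).1 i j = 0 := rfl

lemma add_c1 (w w' : E0) : (w + w').1.1 = w.1.1 + w'.1.1 := rfl
lemma add_c2 (w w' : E0) : (w + w').1.2 = w.1.2 + w'.1.2 := rfl
lemma add_c3 (w w' : E0) : (w + w').2.1 = w.2.1 + w'.2.1 := rfl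
lemma add_c4 (w w' : E0) : (w + w').2.2 = w.2.2 + w'.2.2 := rfl
lemma zero_c1 : (0 : E0).1.1 = 0 := rfl
lemma zero_c2 : (0 : E0).1.2 = 0 := rfl
lemma zero_c3 : (0 : E0).2.1 = 0 := rfl
lemma zero_c4 : (0 : E0).2.2 = 0 := rfl

instance : MulAction AA E0 where
  one_smul w := by
    refine Prod.ext (Prod.ext ?_ ?_) (Prod.ext ?_ ?_) <;>
      simp [smul_c1, smul_c2, smul_c3, smul_c4, coe_one_entry, Matrix.one_apply]
  mul_smul a b w := by
    refine Prod.ext (Prod.ext ?_ ?_) (Prod.ext ?_ ?_) <;>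
      simp only [smul_c1, smul_c2, smul_c3, smul_c4, MulOpposite.unop_mul,
        mul_e00, mul_e01, mul_e02, mul_e11, mul_e22] <;> ring

instance : DistribMulAction AA E0 where
  smul_zero a := by
    refine Prod.ext (Prod.ext ?_ ?_) (Prod.ext ?_ ?_) <;>
      simp [smul_c1, smul_c2, smul_c3, smul_c4, zero_c1, zero_c2, zero_c3, zero_c4]
  smul_add a w w' := by
    refine Prod.ext (Prod.ext ?_ ?_) (Prod.ext ?_ ?_) <;>
      simp only [smul_c1, smul_c2, smul_c3, smul_c4, add_c1, add_c2, add_c3, add_c4] <;> ring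

instance instModuleE0 : Module AA E0 where
  add_smul a b w := by
    refine Prod.ext (Prod.ext ?_ ?_) (Prod.ext ?_ ?_) <;>
      simp only [smul_c1, smul_c2, smul_c3, smul_c4, MulOpposite.unop_add,
        coe_add_entry, add_c1, add_c2, add_c3, add_c4] <;> ring
  zero_smul w := by
    refine Prod.ext (Prod.ext ?_ ?_) (Prod.ext ?_ ?_) <;>
      simp [smul_c1, smul_c2, smul_c3, smul_c4,
        show ((0 : AA)).unop = 0 from rfl, coe_zero_entry,
        zero_c1, zero_c2, zero_c3, zero_c4]

/-- The module `M = e₁₁ R`. -/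
abbrev MM : Type := ↥(RtIdeal (↥TriS) e11)

lemma coe_smul_MM (a : AA) (m : MM) : ((a • m : MM) : ↥TriS) = (m : ↥TriS) * a.unop := by
  rw [Submodule.coe_smul, op_smul_eq]

/-- The embedding of `M` into `E0`. -/
def i0 : MM →ₗ[AA] E0 where
  toFun m := ((m.1.1 0 0, m.1.1 0 1), (m.1.1 0 0, m.1.1 0 2))
  map_add' m n := by
    refine Prod.ext (Prod.ext ?_ ?_) (Prod.ext ?_ ?_) <;> rfl
  map_smul' a m := by
    refine Prod.ext (Prod.ext ?_ ?_) (Prod.ext ?_ ?_) <;>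
      simp only [coe_smul_MM, smul_c1, smul_c2, smul_c3, smul_c4, RingHom.id_apply,
        mul_e00, mul_e01, mul_e02] <;> rfl
lemma mkE_c1 (a b c d : ZMod 2) : (mkE a b c d).1.1 = a := rfl
lemma mkE_c2 (a b c d : ZMod 2) : (mkE a b c d).1.2 = b := rfl
lemma mkE_c3 (a b c d : ZMod 2) : (mkE a b c d).2.1 = c := rfl
lemma mkE_c4 (a b c d : ZMod 2) : (mkE a b c d).2.2 = d := rfl

lemma mkE_eta (w : E0) : w = mkE w.1.1 w.1.2 w.2.1 w.2.2 := rfl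

lemma mkE_inj {a b c d a' b' c' d' : ZMod 2} (h : mkE a b c d = mkE a' b' c' d') :
    a = a' ∧ b = b' ∧ c = c' ∧ d = d' :=
  ⟨congrArg (fun w => w.1.1) h, congrArg (fun w => w.1.2) h,
   congrArg (fun w => w.2.1) h, congrArg (fun w => w.2.2) h⟩

lemma mkE_zero : (0 : E0) = mkE 0 0 0 0 := rfl

/-- matrix units in TriS -/
def t12 : ↥TriS := mk5 0 1 0 0 0
def t13 : ↥TriS := mk5 0 0 1 0 0
def t22 : ↥TriS := mk5 0 0 0 1 0
def t33 : ↥TriS := mk5 0 0 0 0 1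

lemma mm11 (m : MM) : (m : ↥TriS).1 1 1 = 0 := ((mem_rtIdeal m.1).1 m.2).1
lemma mm22 (m : MM) : (m : ↥TriS).1 2 2 = 0 := ((mem_rtIdeal m.1).1 m.2).2

/-- generic element of `M` -/
def mkM (a b c : ZMod 2) : MM :=
  ⟨mk5 a b c 0 0, by rw [mem_rtIdeal]; exact ⟨rfl, rfl⟩⟩

lemma eta_MM (m : MM) : m = mkM (m.1.1 0 0) (m.1.1 0 1) (m.1.1 0 2) := by
  apply Subtype.ext
  conv_lhs => rw [eta m.1]
  rw [mm11 m, mm22 m]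
  rfl

lemma i0_mkM (a b c : ZMod 2) : i0 (mkM a b c) = mkE a b a c := rfl

lemma i0_apply (m : MM) : i0 m = mkE (m.1.1 0 0) (m.1.1 0 1) (m.1.1 0 0) (m.1.1 0 2) := rfl

lemma i0_inj : Function.Injective i0 := by
  intro m n h
  rw [i0_apply, i0_apply] at h
  obtain ⟨h1, h2, h3, h4⟩ := mkE_inj h
  rw [eta_MM m, eta_MM n, h1, h2, h4]

lemma smul_mkE (u : ↥TriS) (w : E0) :
    (op u) • w = mkE (w.1.1 * u.1 0 0) (w.1.1 * u.1 0 1 + w.1.2 * u.1 1 1)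
      (w.2.1 * u.1 0 0) (w.2.1 * u.1 0 2 + w.2.2 * u.1 2 2) := rfl

lemma t12_smul (w : E0) : (op t12) • w = mkE 0 w.1.1 0 0 := by
  rw [smul_mkE]
  show mkE (w.1.1 * 0) (w.1.1 * 1 + w.1.2 * 0) (w.2.1 * 0) (w.2.1 * 0 + w.2.2 * 0) = _
  congr 1 <;> ring

lemma t13_smul (w : E0) : (op t13) • w = mkE 0 0 0 w.2.1 := by
  rw [smul_mkE]
  show mkE (w.1.1 * 0) (w.1.1 * 0 + w.1.2 * 0) (w.2.1 * 0) (w.2.1 * 1 + w.2.2 * 0) = _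
  congr 1 <;> ring

lemma t22_smul (w : E0) : (op t22) • w = mkE 0 w.1.2 0 0 := by
  rw [smul_mkE]
  show mkE (w.1.1 * 0) (w.1.1 * 0 + w.1.2 * 1) (w.2.1 * 0) (w.2.1 * 0 + w.2.2 * 0) = _
  congr 1 <;> ring

lemma t33_smul (w : E0) : (op t33) • w = mkE 0 0 0 w.2.2 := by
  rw [smul_mkE]
  show mkE (w.1.1 * 0) (w.1.1 * 0 + w.1.2 * 0) (w.2.1 * 0) (w.2.1 * 0 + w.2.2 * 1) = _
  congr 1 <;> ring

lemma t1_smul (w : E0) : (op e11) • w = mkE w.1.1 0 w.2.1 0 := by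
  rw [e11_eq, smul_mkE]
  show mkE (w.1.1 * 1) (w.1.1 * 0 + w.1.2 * 0) (w.2.1 * 1) (w.2.1 * 0 + w.2.2 * 0) = _
  congr 1 <;> ring

lemma mkE_ne_zero_of (a b c d : ZMod 2) (h : ¬ (a = 0 ∧ b = 0 ∧ c = 0 ∧ d = 0)) :
    mkE a b c d ≠ 0 := by
  intro hc
  rw [mkE_zero] at hc
  obtain ⟨h1, h2, h3, h4⟩ := mkE_inj hc
  exact h ⟨h1, h2, h3, h4⟩

lemma ess0 : IsEssentialIn AA (LinearMap.range i0) := by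
  intro K hK
  obtain ⟨k, hkK, hk0⟩ := Submodule.exists_mem_ne_zero_of_ne_bot hK
  rw [Submodule.ne_bot_iff]
  rcases eq_or_ne k.1.1 k.2.1 with h | h
  · refine ⟨k, ⟨⟨mkM k.1.1 k.1.2 k.2.2, ?_⟩, hkK⟩, hk0⟩
    rw [i0_mkM]
    conv_rhs => rw [mkE_eta k, ← h]
  · rcases z2 k.1.1 with h1 | h1
    · -- k.1.1 = 0, so k.2.1 = 1
      have h2 : k.2.1 = 1 := by
        rcases z2 k.2.1 with h2 | h2
        · exact absurd (h1.trans h2.symm) h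
        · exact h2
      refine ⟨(op t13) • k, ⟨⟨mkM 0 0 1, ?_⟩, K.smul_mem _ hkK⟩, ?_⟩
      · rw [i0_mkM, t13_smul, h2]
      · rw [t13_smul, h2]
        exact mkE_ne_zero_of _ _ _ _ (by simp)
    · refine ⟨(op t12) • k, ⟨⟨mkM 0 1 0, ?_⟩, K.smul_mem _ hkK⟩, ?_⟩
      · rw [i0_mkM, t12_smul, h1]
      · rw [t12_smul, h1]
        exact mkE_ne_zero_of _ _ _ _ (by simp)
lemma mk5_congr {a b c d e a' b' c' d' e' : ZMod 2} (h1 : a = a') (h2 : b = b')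
    (h3 : c = c') (h4 : d = d') (h5 : e = e') :
    mk5 a b c d e = mk5 a' b' c' d' e' := by
  subst h1; subst h2; subst h3; subst h4; subst h5; rfl

lemma mkE_congr {a b c d a' b' c' d' : ZMod 2} (h1 : a = a') (h2 : b = b')
    (h3 : c = c') (h4 : d = d') : mkE a b c d = mkE a' b' c' d' := by
  subst h1; subst h2; subst h3; subst h4; rfl

lemma mk5_e00 (a b c d e : ZMod 2) : (mk5 a b c d e).1 0 0 = a := rfl
lemma mk5_e01 (a b c d e : ZMod 2) : (mk5 a b c d e).1 0 1 = b := rfl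
lemma mk5_e02 (a b c d e : ZMod 2) : (mk5 a b c d e).1 0 2 = c := rfl
lemma mk5_e11 (a b c d e : ZMod 2) : (mk5 a b c d e).1 1 1 = d := rfl
lemma mk5_e22 (a b c d e : ZMod 2) : (mk5 a b c d e).1 2 2 = e := rfl

lemma mk5_smulE (a' b' c' d' e' : ZMod 2) (w : E0) :
    (op (mk5 a' b' c' d' e')) • w =
      mkE (w.1.1 * a') (w.1.1 * b' + w.1.2 * d') (w.2.1 * a') (w.2.1 * c' + w.2.2 * e') := rfl

lemma g_act (I : Ideal AA) (g : ↥I →ₗ[AA] E0) (y : AA) (memy : y ∈ I) (r : ↥TriS)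
    (z : AA) (hz : op r * y = z) :
    ∃ memz : z ∈ I, g ⟨z, memz⟩ = (op r) • g ⟨y, memy⟩ := by
  subst hz
  refine ⟨I.mul_mem_left (op r) memy, ?_⟩
  have h2 : (⟨op r * y, I.mul_mem_left (op r) memy⟩ : ↥I) = (op r) • ⟨y, memy⟩ :=
    Subtype.ext (by rw [SetLike.val_smul, smul_eq_mul])
  rw [h2, map_smul]

lemma g_zero_sub (I : Ideal AA) (g : ↥I →ₗ[AA] E0) (memz : op (mk5 0 0 0 0 0) ∈ I) :
    g ⟨op (mk5 0 0 0 0 0), memz⟩ = 0 := by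
  have h : (⟨op (mk5 0 0 0 0 0), memz⟩ : ↥I) = 0 := by
    apply Subtype.ext
    show op (mk5 0 0 0 0 0) = 0
    rw [← mk5_zero]
    exact MulOpposite.op_zero
  rw [h, LinearMap.map_zero]

lemma z2flip (x y : ZMod 2) : x + (y + x) = y := by revert x y; decide

set_option maxHeartbeats 1600000 in
set_option synthInstance.maxHeartbeats 400000 in
lemma baer0 : Module.Baer AA E0 := by
  classical
  intro I g
  set α : ZMod 2 :=
    (if h : op (mk5 0 1 0 0 0) ∈ I then (g ⟨op (mk5 0 1 0 0 0), h⟩).1.2 else 0) with hαdef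
  set γ : ZMod 2 :=
    (if h : op (mk5 0 0 1 0 0) ∈ I then (g ⟨op (mk5 0 0 1 0 0), h⟩).2.2 else 0) with hγdef
  set β : ZMod 2 :=
    (if h : op (mk5 0 0 0 1 0) ∈ I then (g ⟨op (mk5 0 0 0 1 0), h⟩).1.2 else
      if h : op (mk5 0 1 0 1 0) ∈ I then (g ⟨op (mk5 0 1 0 1 0), h⟩).1.2 + α else 0) with hβdef
  set δ : ZMod 2 :=
    (if h : op (mk5 0 0 0 0 1) ∈ I then (g ⟨op (mk5 0 0 0 0 1), h⟩).2.2 else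
      if h : op (mk5 0 0 1 0 1) ∈ I then (g ⟨op (mk5 0 0 1 0 1), h⟩).2.2 + γ else 0) with hδdef
  refine ⟨LinearMap.toSpanSingleton AA E0 (mkE α β γ δ), ?_⟩
  intro x mem
  rw [LinearMap.toSpanSingleton_apply]
  have Hm : x = op (mk5 ((MulOpposite.unop x).1 0 0) ((MulOpposite.unop x).1 0 1)
      ((MulOpposite.unop x).1 0 2) ((MulOpposite.unop x).1 1 1) ((MulOpposite.unop x).1 2 2)) := by
    conv_lhs => rw [← MulOpposite.op_unop x]
    exact congrArg op (eta x.unop)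
  obtain ⟨a, b, c, d, e, Hm⟩ : ∃ a b c d e : ZMod 2, x = op (mk5 a b c d e) :=
    ⟨_, _, _, _, _, Hm⟩
  subst Hm
  rw [mk5_smulE]
  simp only [mkE_c1, mkE_c2, mkE_c3, mkE_c4]
  rw [mkE_eta (g ⟨op (mk5 a b c d e), mem⟩)]
  refine mkE_congr ?_ ?_ ?_ ?_
  -- component 1 : α * a = v.1.1
  · rcases z2 a with ha | ha <;> subst ha
    · have hmul : mk5 0 b c d e * mk5 0 1 0 0 0 = mk5 0 0 0 0 0 :=
        (mk5_mul 0 b c d e 0 1 0 0 0).trans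
          (mk5_congr (by ring) (by ring) (by ring) (by ring) (by ring))
      obtain ⟨memz, relz⟩ := g_act I g _ mem (mk5 0 1 0 0 0) (op (mk5 0 0 0 0 0))
        (by rw [← MulOpposite.op_mul, hmul])
      rw [g_zero_sub I g memz, mk5_smulE] at relz
      simp only [mul_zero, mul_one, zero_add, add_zero, mkE_zero] at relz
      obtain ⟨-, h2, -, -⟩ := mkE_inj relz
      rw [← h2]; ring
    · have hmul : mk5 1 b c d e * mk5 0 1 0 0 0 = mk5 0 1 0 0 0 :=
        (mk5_mul 1 b c d e 0 1 0 0 0).trans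
          (mk5_congr (by ring) (by ring) (by ring) (by ring) (by ring))
      obtain ⟨memz, relz⟩ := g_act I g _ mem (mk5 0 1 0 0 0) (op (mk5 0 1 0 0 0))
        (by rw [← MulOpposite.op_mul, hmul])
      rw [mk5_smulE] at relz
      simp only [mul_zero, mul_one, zero_add, add_zero] at relz
      have hα : α = (g ⟨op (mk5 0 1 0 0 0), memz⟩).1.2 := by
        rw [hαdef, dif_pos memz]
      rw [mul_one, hα, relz, mkE_c2]
  -- component 2 : α * b + β * d = v.1.2
  · rcases z2 d with hd | hd <;> subst hd <;> rcases z2 b with hb | hb <;> subst hb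
    · -- d = 0, b = 0
      have hmul : mk5 a 0 c 0 e * mk5 0 0 0 1 0 = mk5 0 0 0 0 0 :=
        (mk5_mul a 0 c 0 e 0 0 0 1 0).trans
          (mk5_congr (by ring) (by ring) (by ring) (by ring) (by ring))
      obtain ⟨memz, relz⟩ := g_act I g _ mem (mk5 0 0 0 1 0) (op (mk5 0 0 0 0 0))
        (by rw [← MulOpposite.op_mul, hmul])
      rw [g_zero_sub I g memz, mk5_smulE] at relz
      simp only [mul_zero, mul_one, zero_add, add_zero, mkE_zero] at relz
      obtain ⟨-, h2, -, -⟩ := mkE_inj relz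
      rw [← h2]; ring
    · -- d = 0, b = 1
      have hmul : mk5 a 1 c 0 e * mk5 0 0 0 1 0 = mk5 0 1 0 0 0 :=
        (mk5_mul a 1 c 0 e 0 0 0 1 0).trans
          (mk5_congr (by ring) (by ring) (by ring) (by ring) (by ring))
      obtain ⟨memz, relz⟩ := g_act I g _ mem (mk5 0 0 0 1 0) (op (mk5 0 1 0 0 0))
        (by rw [← MulOpposite.op_mul, hmul])
      rw [mk5_smulE] at relz
      simp only [mul_zero, mul_one, zero_add, add_zero] at relz
      have hα : α = (g ⟨op (mk5 0 1 0 0 0), memz⟩).1.2 := by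
        rw [hαdef, dif_pos memz]
      rw [mul_one, mul_zero, add_zero, hα, relz, mkE_c2]
    · -- d = 1, b = 0
      have hmul : mk5 a 0 c 1 e * mk5 0 0 0 1 0 = mk5 0 0 0 1 0 :=
        (mk5_mul a 0 c 1 e 0 0 0 1 0).trans
          (mk5_congr (by ring) (by ring) (by ring) (by ring) (by ring))
      obtain ⟨memz, relz⟩ := g_act I g _ mem (mk5 0 0 0 1 0) (op (mk5 0 0 0 1 0))
        (by rw [← MulOpposite.op_mul, hmul])
      rw [mk5_smulE] at relz
      simp only [mul_zero, mul_one, zero_add, add_zero] at relz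
      have hβ : β = (g ⟨op (mk5 0 0 0 1 0), memz⟩).1.2 := by
        rw [hβdef, dif_pos memz]
      rw [mul_zero, mul_one, zero_add, hβ, relz, mkE_c2]
    · -- d = 1, b = 1
      have hmul : mk5 a 1 c 1 e * mk5 0 0 0 1 0 = mk5 0 1 0 1 0 :=
        (mk5_mul a 1 c 1 e 0 0 0 1 0).trans
          (mk5_congr (by ring) (by ring) (by ring) (by ring) (by ring))
      obtain ⟨memz, relz⟩ := g_act I g _ mem (mk5 0 0 0 1 0) (op (mk5 0 1 0 1 0))
        (by rw [← MulOpposite.op_mul, hmul])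
      rw [mk5_smulE] at relz
      simp only [mul_zero, mul_one, zero_add, add_zero] at relz
      by_cases h22 : op (mk5 0 0 0 1 0) ∈ I
      · have hsub : mk5 0 1 0 1 0 - mk5 0 0 0 1 0 = mk5 0 1 0 0 0 := by
          apply Subtype.ext
          show (mk5 0 1 0 1 0).1 - (mk5 0 0 0 1 0).1 = _
          ext i j
          fin_cases i <;> fin_cases j <;>
            simp [mk5, Matrix.vecHead, Matrix.vecTail]
        have mem12 : op (mk5 0 1 0 0 0) ∈ I := by
          have h' := I.sub_mem memz h22
          rwa [← MulOpposite.op_sub, hsub] at h'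
        have hsplit : (⟨op (mk5 0 1 0 1 0), memz⟩ : ↥I) =
            ⟨op (mk5 0 1 0 0 0), mem12⟩ + ⟨op (mk5 0 0 0 1 0), h22⟩ := by
          apply Subtype.ext
          show op (mk5 0 1 0 1 0) = op (mk5 0 1 0 0 0) + op (mk5 0 0 0 1 0)
          rw [← MulOpposite.op_add, mk5_add]
          exact congrArg op (mk5_congr (by decide) (by decide) (by decide)
            (by decide) (by decide)).symm
        rw [hsplit, map_add] at relz
        have hcomp := congrArg (fun w : E0 => w.1.2) relz
        simp only [add_c2, mkE_c2] at hcomp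
        have hα : α = (g ⟨op (mk5 0 1 0 0 0), mem12⟩).1.2 := by
          rw [hαdef, dif_pos mem12]
        have hβ : β = (g ⟨op (mk5 0 0 0 1 0), h22⟩).1.2 := by
          rw [hβdef, dif_pos h22]
        rw [mul_one, mul_one, hα, hβ]
        exact hcomp
      · have hβ : β = (g ⟨op (mk5 0 1 0 1 0), memz⟩).1.2 + α := by
          rw [hβdef, dif_neg h22, dif_pos memz]
        rw [mul_one, mul_one, hβ, relz, mkE_c2]
        exact z2flip _ _
  -- component 3 : γ * a = v.2.1
  · rcases z2 a with ha | ha <;> subst ha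
    · have hmul : mk5 0 b c d e * mk5 0 0 1 0 0 = mk5 0 0 0 0 0 :=
        (mk5_mul 0 b c d e 0 0 1 0 0).trans
          (mk5_congr (by ring) (by ring) (by ring) (by ring) (by ring))
      obtain ⟨memz, relz⟩ := g_act I g _ mem (mk5 0 0 1 0 0) (op (mk5 0 0 0 0 0))
        (by rw [← MulOpposite.op_mul, hmul])
      rw [g_zero_sub I g memz, mk5_smulE] at relz
      simp only [mul_zero, mul_one, zero_add, add_zero, mkE_zero] at relz
      obtain ⟨-, -, -, h4⟩ := mkE_inj relz
      rw [← h4]; ring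
    · have hmul : mk5 1 b c d e * mk5 0 0 1 0 0 = mk5 0 0 1 0 0 :=
        (mk5_mul 1 b c d e 0 0 1 0 0).trans
          (mk5_congr (by ring) (by ring) (by ring) (by ring) (by ring))
      obtain ⟨memz, relz⟩ := g_act I g _ mem (mk5 0 0 1 0 0) (op (mk5 0 0 1 0 0))
        (by rw [← MulOpposite.op_mul, hmul])
      rw [mk5_smulE] at relz
      simp only [mul_zero, mul_one, zero_add, add_zero] at relz
      have hγ : γ = (g ⟨op (mk5 0 0 1 0 0), memz⟩).2.2 := by
        rw [hγdef, dif_pos memz]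
      rw [mul_one, hγ, relz, mkE_c4]
  -- component 4 : γ * c + δ * e = v.2.2
  · rcases z2 e with he | he <;> subst he <;> rcases z2 c with hc | hc <;> subst hc
    · have hmul : mk5 a b 0 d 0 * mk5 0 0 0 0 1 = mk5 0 0 0 0 0 :=
        (mk5_mul a b 0 d 0 0 0 0 0 1).trans
          (mk5_congr (by ring) (by ring) (by ring) (by ring) (by ring))
      obtain ⟨memz, relz⟩ := g_act I g _ mem (mk5 0 0 0 0 1) (op (mk5 0 0 0 0 0))
        (by rw [← MulOpposite.op_mul, hmul])
      rw [g_zero_sub I g memz, mk5_smulE] at relz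
      simp only [mul_zero, mul_one, zero_add, add_zero, mkE_zero] at relz
      obtain ⟨-, -, -, h4⟩ := mkE_inj relz
      rw [← h4]; ring
    · have hmul : mk5 a b 1 d 0 * mk5 0 0 0 0 1 = mk5 0 0 1 0 0 :=
        (mk5_mul a b 1 d 0 0 0 0 0 1).trans
          (mk5_congr (by ring) (by ring) (by ring) (by ring) (by ring))
      obtain ⟨memz, relz⟩ := g_act I g _ mem (mk5 0 0 0 0 1) (op (mk5 0 0 1 0 0))
        (by rw [← MulOpposite.op_mul, hmul])
      rw [mk5_smulE] at relz
      simp only [mul_zero, mul_one, zero_add, add_zero] at relz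
      have hγ : γ = (g ⟨op (mk5 0 0 1 0 0), memz⟩).2.2 := by
        rw [hγdef, dif_pos memz]
      rw [mul_one, mul_zero, add_zero, hγ, relz, mkE_c4]
    · have hmul : mk5 a b 0 d 1 * mk5 0 0 0 0 1 = mk5 0 0 0 0 1 :=
        (mk5_mul a b 0 d 1 0 0 0 0 1).trans
          (mk5_congr (by ring) (by ring) (by ring) (by ring) (by ring))
      obtain ⟨memz, relz⟩ := g_act I g _ mem (mk5 0 0 0 0 1) (op (mk5 0 0 0 0 1))
        (by rw [← MulOpposite.op_mul, hmul])
      rw [mk5_smulE] at relz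
      simp only [mul_zero, mul_one, zero_add, add_zero] at relz
      have hδ : δ = (g ⟨op (mk5 0 0 0 0 1), memz⟩).2.2 := by
        rw [hδdef, dif_pos memz]
      rw [mul_zero, mul_one, zero_add, hδ, relz, mkE_c4]
    · have hmul : mk5 a b 1 d 1 * mk5 0 0 0 0 1 = mk5 0 0 1 0 1 :=
        (mk5_mul a b 1 d 1 0 0 0 0 1).trans
          (mk5_congr (by ring) (by ring) (by ring) (by ring) (by ring))
      obtain ⟨memz, relz⟩ := g_act I g _ mem (mk5 0 0 0 0 1) (op (mk5 0 0 1 0 1))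
        (by rw [← MulOpposite.op_mul, hmul])
      rw [mk5_smulE] at relz
      simp only [mul_zero, mul_one, zero_add, add_zero] at relz
      by_cases h33 : op (mk5 0 0 0 0 1) ∈ I
      · have hsub : mk5 0 0 1 0 1 - mk5 0 0 0 0 1 = mk5 0 0 1 0 0 := by
          apply Subtype.ext
          show (mk5 0 0 1 0 1).1 - (mk5 0 0 0 0 1).1 = _
          ext i j
          fin_cases i <;> fin_cases j <;>
            simp [mk5, Matrix.vecHead, Matrix.vecTail]
        have mem13 : op (mk5 0 0 1 0 0) ∈ I := by
          have h' := I.sub_mem memz h33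
          rwa [← MulOpposite.op_sub, hsub] at h'
        have hsplit : (⟨op (mk5 0 0 1 0 1), memz⟩ : ↥I) =
            ⟨op (mk5 0 0 1 0 0), mem13⟩ + ⟨op (mk5 0 0 0 0 1), h33⟩ := by
          apply Subtype.ext
          show op (mk5 0 0 1 0 1) = op (mk5 0 0 1 0 0) + op (mk5 0 0 0 0 1)
          rw [← MulOpposite.op_add, mk5_add]
          exact congrArg op (mk5_congr (by decide) (by decide) (by decide)
            (by decide) (by decide)).symm
        rw [hsplit, map_add] at relz
        have hcomp := congrArg (fun w : E0 => w.2.2) relz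
        simp only [add_c4, mkE_c4] at hcomp
        have hγ : γ = (g ⟨op (mk5 0 0 1 0 0), mem13⟩).2.2 := by
          rw [hγdef, dif_pos mem13]
        have hδ : δ = (g ⟨op (mk5 0 0 0 0 1), h33⟩).2.2 := by
          rw [hδdef, dif_pos h33]
        rw [mul_one, mul_one, hγ, hδ]
        exact hcomp
      · have hδ : δ = (g ⟨op (mk5 0 0 1 0 1), memz⟩).2.2 + γ := by
          rw [hδdef, dif_neg h33, dif_pos memz]
        rw [mul_one, mul_one, hδ, relz, mkE_c4]
        exact z2flip _ _

lemma inj0 : Module.Injective AA E0 := baer0.injective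
instance : DecidableEq E0 :=
  inferInstanceAs (DecidableEq ((ZMod 2 × ZMod 2) × (ZMod 2 × ZMod 2)))

set_option maxHeartbeats 1600000 in
set_option synthInstance.maxHeartbeats 400000 in
lemma aut_trivial (σ : E0 ≃ₗ[AA] E0) : ∀ w : E0, σ w = w := by
  -- σ fixes u2 = mkE 1 0 0 0
  have hu2 : σ (mkE 1 0 0 0) = mkE 1 0 0 0 := by
    have r1 : op (mk5 1 0 0 0 0) • (mkE 1 0 0 0) = mkE 1 0 0 0 := by decide
    have r2 : op (mk5 0 0 1 0 0) • (mkE 1 0 0 0) = 0 := by decide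
    have s1 : σ (mkE 1 0 0 0) = mkE (σ (mkE 1 0 0 0)).1.1 0 (σ (mkE 1 0 0 0)).2.1 0 := by
      conv_lhs => rw [← r1, map_smul, mk5_smulE]
      exact mkE_congr (by ring) (by ring) (by ring) (by ring)
    have s2 : mkE 0 0 0 (σ (mkE 1 0 0 0)).2.1 = 0 := by
      have h2 : σ (op (mk5 0 0 1 0 0) • (mkE 1 0 0 0)) = 0 := by rw [r2, map_zero]
      rw [map_smul, mk5_smulE] at h2
      rw [← h2]
      exact mkE_congr (by ring) (by ring) (by ring) (by ring)
    obtain ⟨-, -, -, h4⟩ := mkE_inj (s2.trans mkE_zero)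
    rcases z2 (σ (mkE 1 0 0 0)).1.1 with h1 | h1
    · exfalso
      have hz : σ (mkE 1 0 0 0) = σ 0 := by
        rw [map_zero, s1, h1, h4, ← mkE_zero]
      exact absurd (σ.injective hz) (by decide)
    · rw [s1, h1, h4]
  -- σ fixes u3 = mkE 0 0 1 0
  have hu3 : σ (mkE 0 0 1 0) = mkE 0 0 1 0 := by
    have r1 : op (mk5 1 0 0 0 0) • (mkE 0 0 1 0) = mkE 0 0 1 0 := by decide
    have r2 : op (mk5 0 1 0 0 0) • (mkE 0 0 1 0) = 0 := by decide
    have s1 : σ (mkE 0 0 1 0) = mkE (σ (mkE 0 0 1 0)).1.1 0 (σ (mkE 0 0 1 0)).2.1 0 := by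
      conv_lhs => rw [← r1, map_smul, mk5_smulE]
      exact mkE_congr (by ring) (by ring) (by ring) (by ring)
    have s2 : mkE 0 (σ (mkE 0 0 1 0)).1.1 0 0 = 0 := by
      have h2 : σ (op (mk5 0 1 0 0 0) • (mkE 0 0 1 0)) = 0 := by rw [r2, map_zero]
      rw [map_smul, mk5_smulE] at h2
      rw [← h2]
      exact mkE_congr (by ring) (by ring) (by ring) (by ring)
    obtain ⟨-, h2', -, -⟩ := mkE_inj (s2.trans mkE_zero)
    rcases z2 (σ (mkE 0 0 1 0)).2.1 with h1 | h1
    · exfalso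
      have hz : σ (mkE 0 0 1 0) = σ 0 := by
        rw [map_zero, s1, h1, h2', ← mkE_zero]
      exact absurd (σ.injective hz) (by decide)
    · rw [s1, h1, h2']
  -- σ fixes v2 and v3
  have hv2 : σ (mkE 0 1 0 0) = mkE 0 1 0 0 := by
    have r : op (mk5 0 1 0 0 0) • (mkE 1 0 0 0) = mkE 0 1 0 0 := by decide
    rw [← r, map_smul, hu2]
  have hv3 : σ (mkE 0 0 0 1) = mkE 0 0 0 1 := by
    have r : op (mk5 0 0 1 0 0) • (mkE 0 0 1 0) = mkE 0 0 0 1 := by decide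
    rw [← r, map_smul, hu3]
  -- general element
  have c1 : ∀ a : ZMod 2, σ (mkE a 0 0 0) = mkE a 0 0 0 := by
    intro a; rcases z2 a with h | h <;> subst h
    · rw [← mkE_zero, map_zero]
    · exact hu2
  have c2 : ∀ a : ZMod 2, σ (mkE 0 a 0 0) = mkE 0 a 0 0 := by
    intro a; rcases z2 a with h | h <;> subst h
    · rw [← mkE_zero, map_zero]
    · exact hv2
  have c3 : ∀ a : ZMod 2, σ (mkE 0 0 a 0) = mkE 0 0 a 0 := by
    intro a; rcases z2 a with h | h <;> subst h
    · rw [← mkE_zero, map_zero]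
    · exact hu3
  have c4 : ∀ a : ZMod 2, σ (mkE 0 0 0 a) = mkE 0 0 0 a := by
    intro a; rcases z2 a with h | h <;> subst h
    · rw [← mkE_zero, map_zero]
    · exact hv3
  intro w
  have hw : w = mkE w.1.1 0 0 0 + mkE 0 w.1.2 0 0 + mkE 0 0 w.2.1 0 + mkE 0 0 0 w.2.2 := by
    refine Prod.ext (Prod.ext ?_ ?_) (Prod.ext ?_ ?_) <;>
      simp only [add_c1, add_c2, add_c3, add_c4, mkE_c1, mkE_c2, mkE_c3, mkE_c4] <;>
      ring
  conv_lhs => rw [hw]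
  rw [map_add, map_add, map_add, c1, c2, c3, c4, ← hw]
set_option maxHeartbeats 1600000 in
set_option synthInstance.maxHeartbeats 400000 in
lemma autinvMM : IsAutInv AA MM := by
  rintro E _ _ i ⟨hinj, hEinj, hess⟩ σ
  -- extend i along i0 using injectivity of E
  obtain ⟨h, hh⟩ := hEinj.out (X := MM) (Y := E0) i0 i0_inj i
  -- h is injective by essentiality of range i0 in E0
  have hInj : Function.Injective h := by
    rw [← LinearMap.ker_eq_bot]
    by_contra hne
    obtain ⟨z, ⟨hzr, hzk⟩, hz0⟩ := Submodule.exists_mem_ne_zero_of_ne_bot (ess0 _ hne)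
    obtain ⟨m, rfl⟩ := hzr
    have hzk' : i m = 0 := by rw [← hh m]; exact hzk
    have : m = 0 := hinj (by rw [hzk', map_zero])
    rw [this, map_zero] at hz0
    exact hz0 rfl
  -- retraction via injectivity of E0
  obtain ⟨π, hπ⟩ := inj0.out h hInj (LinearMap.id : E0 →ₗ[AA] E0)
  have hπinj : Function.Injective π := by
    rw [← LinearMap.ker_eq_bot]
    by_contra hne
    obtain ⟨z, ⟨hzr, hzk⟩, hz0⟩ := Submodule.exists_mem_ne_zero_of_ne_bot (hess _ hne)
    obtain ⟨m, rfl⟩ := hzr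
    have hzk' : i0 m = 0 := by
      have h0 : π (i m) = 0 := hzk
      rw [← hh m, hπ (i0 m)] at h0
      exact h0
    have : m = 0 := i0_inj (by rw [hzk', map_zero])
    rw [this, map_zero] at hz0
    exact hz0 rfl
  have hsurj : Function.Surjective h := by
    intro e
    refine ⟨π e, hπinj ?_⟩
    rw [hπ (π e)]
    rfl
  set ψ := LinearEquiv.ofBijective h ⟨hInj, hsurj⟩ with hψ
  have hfix : ∀ e : E, σ e = e := by
    intro e
    have ht := aut_trivial ((ψ.trans σ).trans ψ.symm) (ψ.symm e)
    simp only [LinearEquiv.trans_apply] at ht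
    rw [ψ.apply_symm_apply] at ht
    have := congrArg ψ ht
    rw [ψ.apply_symm_apply, ψ.apply_symm_apply] at this
    exact this
  rintro z ⟨y, hy, rfl⟩
  simpa [hfix y] using hy

lemma top_of (N : Submodule AA MM) (m : MM) (hm : m ∈ N)
    (h1 : (m : ↥TriS).1 0 0 = 1) : N = ⊤ := by
  have hval : (m : ↥TriS) = mk5 1 ((m:↥TriS).1 0 1) ((m:↥TriS).1 0 2) 0 0 := by
    conv_lhs => rw [eta (m : ↥TriS)]
    rw [mm11 m, mm22 m, h1]
  have he : mkM 1 0 0 = op (mk5 1 0 0 0 0) • m := by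
    apply Subtype.ext
    rw [coe_smul_MM, MulOpposite.unop_op, hval, mk5_mul]
    show mk5 1 0 0 0 0 = _
    exact mk5_congr (by ring) (by ring) (by ring) (by ring) (by ring)
  have heN : mkM 1 0 0 ∈ N := by rw [he]; exact N.smul_mem _ hm
  rw [eq_top_iff]
  intro t _
  have ht : t = op (t : ↥TriS) • mkM 1 0 0 := by
    apply Subtype.ext
    rw [coe_smul_MM, MulOpposite.unop_op]
    show (t : ↥TriS) = (mk5 1 0 0 0 0) * (t : ↥TriS)
    rw [← e11_eq, e11_mul_self (t : ↥TriS) (mm11 t) (mm22 t)]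
  rw [ht]
  exact N.smul_mem _ heN

lemma mkM_ne_zero : mkM 1 0 0 ≠ 0 := by
  intro h
  have h' := congrArg (fun m : MM => (m : ↥TriS).1 0 0) h
  change (1 : ZMod 2) = 0 at h'
  exact one_ne_zero h'

lemma nontrivMM : Nontrivial MM := ⟨⟨mkM 1 0 0, 0, mkM_ne_zero⟩⟩

lemma indecMM : IsIndecomposableMod AA MM := by
  refine ⟨nontrivMM, fun N1 N2 hc => ?_⟩
  by_cases hb1 : N1 = ⊥
  · exact Or.inl hb1
  by_cases hb2 : N2 = ⊥
  · exact Or.inr hb2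
  exfalso
  have hcoord : ∀ (N : Submodule AA MM), N ≠ ⊤ → ∀ m ∈ N, (m : ↥TriS).1 0 0 = 0 := by
    intro N hN m hm
    rcases z2 ((m : ↥TriS).1 0 0) with h | h
    · exact h
    · exact absurd (top_of N m hm h) hN
  have hN1top : N1 ≠ ⊤ := by
    intro htop
    apply hb2
    have := disjoint_iff.mp hc.disjoint
    rwa [htop, top_inf_eq] at this
  have hN2top : N2 ≠ ⊤ := by
    intro htop
    apply hb1
    have := disjoint_iff.mp hc.disjoint
    rwa [htop, inf_top_eq] at this
  have hsup := codisjoint_iff.mp hc.codisjoint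
  have hmem : mkM 1 0 0 ∈ N1 ⊔ N2 := by rw [hsup]; trivial
  obtain ⟨x, hx, y, hy, hxy⟩ := Submodule.mem_sup.mp hmem
  have hx0 := hcoord N1 hN1top x hx
  have hy0 := hcoord N2 hN2top y hy
  have := congrArg (fun m : MM => (m : ↥TriS).1 0 0) hxy
  simp only [Submodule.coe_add, coe_add_entry, hx0, hy0, add_zero, mk5_e00] at this
  exact one_ne_zero this.symm

/-- the socle `{m ∈ M : m₀₀ = 0}` as a submodule -/
def NN : Submodule AA MM where
  carrier := {m | (m : ↥TriS).1 0 0 = 0}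
  zero_mem' := rfl
  add_mem' := by
    intro x y hx hy
    show ((x + y : MM) : ↥TriS).1 0 0 = 0
    rw [Submodule.coe_add, coe_add_entry, hx, hy, add_zero]
  smul_mem' := by
    intro c x hx
    show ((c • x : MM) : ↥TriS).1 0 0 = 0
    rw [coe_smul_MM, mul_e00, hx, zero_mul]

lemma mkM_coe (a b c : ZMod 2) : ((mkM a b c : MM) : ↥TriS) = mk5 a b c 0 0 := rfl

lemma notQIMM : ¬ IsQuasiInj AA MM := by
  intro hQI
  have fadd : ∀ x y : ↥NN, op t22 • ((x + y : ↥NN) : MM) =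
      op t22 • (x : MM) + op t22 • (y : MM) := by
    intro x y
    rw [Submodule.coe_add, smul_add]
  have fsmul : ∀ (a : AA) (x : ↥NN), op t22 • ((a • x : ↥NN) : MM) =
      a • (op t22 • (x : MM)) := by
    intro a x
    apply Subtype.ext
    have hx : ((x : MM) : ↥TriS) = mk5 0 (((x:MM):↥TriS).1 0 1) (((x:MM):↥TriS).1 0 2) 0 0 := by
      have hx0 : ((x : MM) : ↥TriS).1 0 0 = 0 := x.2
      conv_lhs => rw [eta ((x : MM) : ↥TriS)]
      rw [mm11 (x : MM), mm22 (x : MM), hx0]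
    simp only [coe_smul_MM, SetLike.val_smul, MulOpposite.smul_eq_mul_unop,
      MulOpposite.unop_op]
    rw [hx, eta a.unop, show t22 = mk5 0 0 0 1 0 from rfl, mk5_mul, mk5_mul, mk5_mul, mk5_mul]
    exact mk5_congr (by ring) (by ring) (by ring) (by ring) (by ring)
  set f : ↥NN →ₗ[AA] MM :=
    { toFun := fun n => op t22 • (n : MM)
      map_add' := fadd
      map_smul' := fsmul } with hf
  obtain ⟨g, hg⟩ := hQI NN f
  set w := g (mkM 1 0 0) with hw
  -- first evaluation : at (0,1,0)
  have hn1mem : mkM 0 1 0 ∈ NN := rfl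
  have heq1 : mkM 0 1 0 = op t12 • mkM 1 0 0 := by
    apply Subtype.ext
    rw [coe_smul_MM, MulOpposite.unop_op]
    show mk5 0 1 0 0 0 = mk5 1 0 0 0 0 * mk5 0 1 0 0 0
    rw [mk5_mul]
    exact (mk5_congr (by ring) (by ring) (by ring) (by ring) (by ring)).symm
  have hg1 := hg ⟨mkM 0 1 0, hn1mem⟩
  rw [hf] at hg1
  simp only [LinearMap.coe_mk, AddHom.coe_mk] at hg1
  -- hg1 : g (mkM 0 1 0) = op t22 • mkM 0 1 0
  have hL1 : g (mkM 0 1 0) = op t12 • w := by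
    rw [heq1, map_smul, hw]
  have E1 : op t12 • w = op t22 • (mkM 0 1 0 : MM) := by rw [← hL1, hg1]
  have hw00_1 : (w : ↥TriS).1 0 0 = 1 := by
    have := congrArg (fun m : MM => (m : ↥TriS).1 0 1) E1
    simp only [coe_smul_MM, MulOpposite.unop_op] at this
    rw [show t12 = mk5 0 1 0 0 0 from rfl, show t22 = mk5 0 0 0 1 0 from rfl] at this
    rw [mul_e01, mul_e01] at this
    simpa [mkM_coe, mk5_e00, mk5_e01, mk5_e11] using this
  -- second evaluation : at (0,0,1)
  have hn2mem : mkM 0 0 1 ∈ NN := rfl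
  have heq2 : mkM 0 0 1 = op t13 • mkM 1 0 0 := by
    apply Subtype.ext
    rw [coe_smul_MM, MulOpposite.unop_op]
    show mk5 0 0 1 0 0 = mk5 1 0 0 0 0 * mk5 0 0 1 0 0
    rw [mk5_mul]
    exact (mk5_congr (by ring) (by ring) (by ring) (by ring) (by ring)).symm
  have hg2 := hg ⟨mkM 0 0 1, hn2mem⟩
  rw [hf] at hg2
  simp only [LinearMap.coe_mk, AddHom.coe_mk] at hg2
  have hL2 : g (mkM 0 0 1) = op t13 • w := by
    rw [heq2, map_smul, hw]
  have E2 : op t13 • w = op t22 • (mkM 0 0 1 : MM) := by rw [← hL2, hg2]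
  have hw00_0 : (w : ↥TriS).1 0 0 = 0 := by
    have := congrArg (fun m : MM => (m : ↥TriS).1 0 2) E2
    simp only [coe_smul_MM, MulOpposite.unop_op] at this
    rw [show t13 = mk5 0 0 1 0 0 from rfl, show t22 = mk5 0 0 0 1 0 from rfl] at this
    rw [mul_e02, mul_e02] at this
    simpa [mkM_coe, mk5_e00, mk5_e02, mk5_e22] using this
  rw [hw00_1] at hw00_0
  exact one_ne_zero hw00_0
end Work
/-- For the ring `R = TriS` of upper-left-row matrices over `𝔽₂`, the right
`R`-module `e₁₁R` is indecomposable and automorphism-invariant but not quasi-injective. In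
particular, there exists a finite-dimensional algebra over the field with two elements with an
indecomposable automorphism-invariant right module that is not quasi-injective. -/
theorem stmt_19 :
    (IsIndecomposableMod (↥TriS)ᵐᵒᵖ ↥(RtIdeal (↥TriS) e11) ∧
      IsAutInv (↥TriS)ᵐᵒᵖ ↥(RtIdeal (↥TriS) e11) ∧
      ¬ IsQuasiInj (↥TriS)ᵐᵒᵖ ↥(RtIdeal (↥TriS) e11)) ∧
    Nonempty FDTwoElementFieldCounterexample := by
  refine ⟨⟨indecMM, autinvMM, notQIMM⟩, ⟨?_⟩⟩
  exact { A := ↥TriS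
          fd := inferInstance
          M := MM
          indec := indecMM
          autinv := autinvMM
          notQI := notQIMM }
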